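/- Along any solution of the dynamical system da/dt = Bc, dB/dt = a c^T, dc/dt = B^T a, the energy E = a^T B c satisfies the differential inequality E'(t) ≥ 3 E(t)^{4/3} whenever E(t) ≥ 0; in particular E is monotonically nondecreasing. -/

import Mathlib

/-- AM–GM for three nonnegative reals. -/
lemma amgm3 {x y z : ℝ} (hx : 0 ≤ x) (hy : 0 ≤ y) (hz : 0 ≤ z) :
    27 * (x * y * z) ≤ (x + y + z) ^ 3 := by
  nlinarith [mul_nonneg hz (sq_nonneg (x - y)), mul_nonneg hx (sq_nonneg (y - z)),
    mul_nonneg hy (sq_nonneg (x - z)), sq_nonneg (x - y), sq_nonneg (y - z), sq_nonneg (x - z),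
    mul_nonneg (mul_nonneg hx hy) hz]

/-- Along any solution, the energy `E = aᵀ B c` satisfies `E' ≥ 3 E^{4/3}`
whenever `E ≥ 0`; in particular `E` is monotonically nondecreasing. -/
theorem stmt_4 (m : ℕ) (a c : ℝ → Fin m → ℝ) (B : ℝ → Fin m → Fin m → ℝ)
    (ha : ∀ t i, HasDerivAt (fun s => a s i) (∑ j, B t i j * c t j) t)
    (hB : ∀ t i j, HasDerivAt (fun s => B s i j) (a t i * c t j) t)
    (hc : ∀ t j, HasDerivAt (fun s => c s j) (∑ i, B t i j * a t i) t)
    (E : ℝ → ℝ) (hE : ∀ t, E t = ∑ i, ∑ j, a t i * B t i j * c t j) :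
    (∀ (t : ℝ) (D : ℝ), HasDerivAt E D t → 0 ≤ E t → 3 * E t ^ ((4:ℝ)/3) ≤ D) ∧
      Monotone E := by
  have hD0 : ∀ t, HasDerivAt E
      ((∑ i, (∑ j, B t i j * c t j) ^ 2) + (∑ j, (∑ i, B t i j * a t i) ^ 2)
        + (∑ i, (a t i) ^ 2) * (∑ j, (c t j) ^ 2)) t := by
    intro t
    have hfun : E = fun s => ∑ i, ∑ j, a s i * B s i j * c s j := funext hE
    have h1 : HasDerivAt (fun s => ∑ i, ∑ j, a s i * B s i j * c s j)
        (∑ i, ∑ j, ((∑ k, B t i k * c t k) * B t i j * c t j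
          + a t i * (a t i * c t j) * c t j
          + a t i * B t i j * (∑ k, B t k j * a t k))) t := by
      apply HasDerivAt.fun_sum
      intro i _
      apply HasDerivAt.fun_sum
      intro j _
      have := ((ha t i).fun_mul (hB t i j)).fun_mul (hc t j)
      exact this.congr_deriv (by ring)
    rw [hfun]
    have e1 : ∑ i, ∑ j, (∑ k, B t i k * c t k) * B t i j * c t j
        = ∑ i, (∑ j, B t i j * c t j) ^ 2 := by
      apply Finset.sum_congr rfl; intro i _
      rw [sq, Finset.mul_sum]
      apply Finset.sum_congr rfl; intro j _; ring
    have e2 : ∑ i, ∑ j, a t i * (a t i * c t j) * c t j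
        = (∑ i, (a t i) ^ 2) * (∑ j, (c t j) ^ 2) := by
      rw [Finset.sum_mul_sum]
      apply Finset.sum_congr rfl; intro i _
      apply Finset.sum_congr rfl; intro j _; ring
    have e3 : ∑ i, ∑ j, a t i * B t i j * (∑ k, B t k j * a t k)
        = ∑ j, (∑ i, B t i j * a t i) ^ 2 := by
      rw [Finset.sum_comm]
      apply Finset.sum_congr rfl; intro j _
      rw [sq, ← Finset.sum_mul]
      congr 1
      apply Finset.sum_congr rfl; intro i _; ring
    convert h1 using 1
    simp only [Finset.sum_add_distrib]
    rw [e1, e2, e3]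
    ring
  constructor
  · intro t D hD hEt
    have hDeq : D = (∑ i, (∑ j, B t i j * c t j) ^ 2) + (∑ j, (∑ i, B t i j * a t i) ^ 2)
        + (∑ i, (a t i) ^ 2) * (∑ j, (c t j) ^ 2) := hD.unique (hD0 t)
    set x := ∑ i, (∑ j, B t i j * c t j) ^ 2 with hxdef
    set y := ∑ j, (∑ i, B t i j * a t i) ^ 2 with hydef
    set p := ∑ i, (a t i) ^ 2 with hpdef
    set q := ∑ j, (c t j) ^ 2 with hqdef
    have hx : 0 ≤ x := Finset.sum_nonneg fun i _ => sq_nonneg _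
    have hy : 0 ≤ y := Finset.sum_nonneg fun i _ => sq_nonneg _
    have hp : 0 ≤ p := Finset.sum_nonneg fun i _ => sq_nonneg _
    have hq : 0 ≤ q := Finset.sum_nonneg fun i _ => sq_nonneg _
    -- Cauchy–Schwarz: E² ≤ p x and E² ≤ q y
    have hE1 : E t = ∑ i, a t i * (∑ j, B t i j * c t j) := by
      rw [hE t]; apply Finset.sum_congr rfl; intro i _
      rw [Finset.mul_sum]; apply Finset.sum_congr rfl; intro j _; ring
    have hE2 : E t = ∑ j, c t j * (∑ i, B t i j * a t i) := by
      rw [hE t, Finset.sum_comm]; apply Finset.sum_congr rfl; intro j _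
      rw [Finset.mul_sum]; apply Finset.sum_congr rfl; intro i _; ring
    have hcs1 : (E t) ^ 2 ≤ p * x := by
      rw [hE1]; exact Finset.sum_mul_sq_le_sq_mul_sq _ _ _
    have hcs2 : (E t) ^ 2 ≤ q * y := by
      rw [hE2]; exact Finset.sum_mul_sq_le_sq_mul_sq _ _ _
    rw [hDeq]
    -- reduce to cubes
    set S : ℝ := x + y + p * q with hSdef
    have hS : 0 ≤ S := by positivity
    have key : 27 * (E t) ^ 4 ≤ S ^ 3 := by
      have h1 : (E t) ^ 4 ≤ (p * x) * (q * y) := by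
        have := mul_le_mul hcs1 hcs2 (sq_nonneg (E t)) (mul_nonneg hp hx)
        nlinarith [sq_nonneg (E t)]
      have h2 : 27 * (x * y * (p * q)) ≤ S ^ 3 := amgm3 hx hy (mul_nonneg hp hq)
      nlinarith
    have hpow : (3 * E t ^ ((4:ℝ)/3)) ^ 3 ≤ S ^ 3 := by
      have : (E t ^ ((4:ℝ)/3)) ^ (3:ℕ) = E t ^ (4:ℕ) := by
        rw [← Real.rpow_natCast (E t ^ ((4:ℝ)/3)) 3, ← Real.rpow_mul hEt,
          ← Real.rpow_natCast (E t) 4]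
        norm_num
      calc (3 * E t ^ ((4:ℝ)/3)) ^ 3 = 27 * (E t ^ ((4:ℝ)/3)) ^ (3:ℕ) := by ring
      _ = 27 * E t ^ (4:ℕ) := by rw [this]
      _ ≤ S ^ 3 := key
    exact le_of_pow_le_pow_left₀ (by norm_num) hS hpow
  · apply monotone_of_deriv_nonneg
    · exact fun t => (hD0 t).differentiableAt
    · intro t
      rw [(hD0 t).deriv]
      positivity
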